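/- Let 𝔸 = (A, ≤, →, Σ) be an implicative algebra with |A| < κ for a strongly inaccessible cardinal κ, and let W, ∈_W, =_W and the interpretation ‖·‖ be as defined below. If φ[x̄] and ψ[x̄] are formulas in a context x̄ of length n and the sequent φ ⊢ ψ is derivable in intuitionistic first-order logic with equality, then ‖φ[x̄]‖ ⊢_{Σ[Wⁿ]} ‖ψ[x̄]‖, i.e. ⨅_{ᾱ∈Wⁿ} (‖φ[x̄]‖(ᾱ) → ‖ψ[x̄]‖(ᾱ)) ∈ Σ. -/

import Mathlib

universe u

/-- An implicative algebra `𝔸 = (A, ≤, →, Σ)`:  a complete lattice `(A, ≤)` together with an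
implication `imp` which is antitone in its first argument, monotone in its second argument and
turns infima in the second argument into infima, and a separator `Sig ⊆ A` which is upward
closed, closed under modus ponens and contains the combinators `K` and `S`. -/
structure ImplicativeAlgebra (A : Type u) [CompleteLattice A] where
  imp : A → A → A
  imp_antitone : ∀ ⦃a a' b : A⦄, a ≤ a' → imp a' b ≤ imp a b
  imp_monotone : ∀ ⦃a b b' : A⦄, b ≤ b' → imp a b ≤ imp a b'
  imp_sInf : ∀ (a : A) (S : Set A), imp a (sInf S) = ⨅ b ∈ S, imp a b
  Sig : Set A
  Sig_upward : ∀ ⦃a b : A⦄, a ∈ Sig → a ≤ b → b ∈ Sig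
  Sig_mp : ∀ ⦃a b : A⦄, imp a b ∈ Sig → a ∈ Sig → b ∈ Sig
  Sig_K : (⨅ a : A, ⨅ b : A, imp a (imp b a)) ∈ Sig
  Sig_S : (⨅ a : A, ⨅ b : A, ⨅ c : A,
      imp (imp a (imp b c)) (imp (imp a b) (imp a c))) ∈ Sig

namespace ImplicativeAlgebra

variable {A : Type u} [CompleteLattice A]

/-- `a × b := ⨅ x, ((a → (b → x)) → x)`. -/
def times (IA : ImplicativeAlgebra A) (a b : A) : A :=
  ⨅ x : A, IA.imp (IA.imp a (IA.imp b x)) x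

/-- `a + b := ⨅ x, ((a → x) → ((b → x) → x))`. -/
def plus (IA : ImplicativeAlgebra A) (a b : A) : A :=
  ⨅ x : A, IA.imp (IA.imp a x) (IA.imp (IA.imp b x) x)

/-- `∃⃗_{i} f i := ⨅ x, ((⨅ i, (f i → x)) → x)`.  (`∀⃗` is just `⨅`.) -/
def aex (IA : ImplicativeAlgebra A) {ι : Sort*} (f : ι → A) : A :=
  ⨅ x : A, IA.imp (⨅ i, IA.imp (f i) x) x

/-- `φ ⊢_{Σ[I]} ψ` iff `⨅ i, (φ i → ψ i) ∈ Σ`. -/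
def SigLe (IA : ImplicativeAlgebra A) {ι : Sort*} (f g : ι → A) : Prop :=
  (⨅ i, IA.imp (f i) (g i)) ∈ IA.Sig

/-- `φ ≡_{Σ[I]} ψ` iff `φ ⊢_{Σ[I]} ψ` and `ψ ⊢_{Σ[I]} φ`. -/
def SigEquiv (IA : ImplicativeAlgebra A) {ι : Sort*} (f g : ι → A) : Prop :=
  IA.SigLe f g ∧ IA.SigLe g f

end ImplicativeAlgebra

/-- Pre-elements of the cumulative hierarchy of partial functions valued in `A`:
an element is an `A`-labelled family of previously constructed elements, i.e. a partial
function (presented by a family indexed by its domain) from earlier elements to `A`. -/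
inductive PreW (A : Type u) : Type (u + 1)
  | mk (ι : Type u) (fam : ι → PreW A) (val : ι → A)

namespace PreW

variable {A : Type u}

/-- The (index type of the) domain of a partial function. -/
def dom : PreW A → Type u
  | ⟨ι, _, _⟩ => ι

/-- The family of elements of the domain. -/
def fam : (w : PreW A) → w.dom → PreW A
  | ⟨_, f, _⟩ => f

/-- The values in `A` of the partial function. -/
def val : (w : PreW A) → w.dom → A
  | ⟨_, _, v⟩ => v

/-- `w` is hereditarily of size `< κ`:  this carves out exactly the elements of the stage
`W_κ` of the hierarchy (for `κ` inaccessible). -/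
def HSmall (κ : Cardinal.{u}) : PreW A → Prop
  | ⟨ι, f, _⟩ => Cardinal.mk ι < κ ∧ ∀ i, HSmall κ (f i)

theorem HSmall.fam {κ : Cardinal.{u}} :
    ∀ {w : PreW A}, w.HSmall κ → ∀ i : w.dom, (w.fam i).HSmall κ
  | ⟨_, _, _⟩, h, i => h.2 i

/-- The rank of an element of the hierarchy. -/
noncomputable def rank : PreW A → Ordinal.{u}
  | ⟨_, f, _⟩ => ⨆ i, Order.succ (rank (f i))

theorem rank_lt_mk {ι : Type u} (f : ι → PreW A) (v : ι → A) (i : ι) :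
    (f i).rank < (PreW.mk ι f v).rank := by
  have h : Order.succ (f i).rank ≤ ⨆ j, Order.succ (f j).rank := Ordinal.le_iSup _ i
  have : (f i).rank < ⨆ j, Order.succ (f j).rank :=
    lt_of_lt_of_le (Order.lt_succ _) h
  simpa [rank] using this

end PreW

namespace ImplicativeAlgebra

variable {A : Type u} [CompleteLattice A]

/-- `α =_W β`, defined by recursion on rank:
`α =_W β := (α ⊆_W β) × (β ⊆_W α)` where
`α ⊆_W β := ∀⃗_{t ∈ dom α} (α t → (fam α t ∈_W β))` and
`γ ∈_W β := ∃⃗_{s ∈ dom β} (β s × (fam β s =_W γ))`. -/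
noncomputable def eqW (IA : ImplicativeAlgebra A) : PreW A → PreW A → A
  | ⟨ι₁, f₁, v₁⟩, ⟨ι₂, f₂, v₂⟩ =>
    IA.times
      (⨅ t : ι₁, IA.imp (v₁ t)
        (IA.aex fun s : ι₂ => IA.times (v₂ s) (IA.eqW (f₂ s) (f₁ t))))
      (⨅ t : ι₂, IA.imp (v₂ t)
        (IA.aex fun s : ι₁ => IA.times (v₁ s) (IA.eqW (f₁ s) (f₂ t))))
termination_by α β => max α.rank β.rank
decreasing_by
  · exact max_lt (lt_max_of_lt_right (PreW.rank_lt_mk f₂ v₂ s))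
      (lt_max_of_lt_left (PreW.rank_lt_mk f₁ v₁ t))
  · exact max_lt (lt_max_of_lt_left (PreW.rank_lt_mk f₁ v₁ s))
      (lt_max_of_lt_right (PreW.rank_lt_mk f₂ v₂ t))

/-- `α ∈_W β := ∃⃗_{s ∈ dom β} (β s × (fam β s =_W α))`. -/
noncomputable def memW (IA : ImplicativeAlgebra A) (α β : PreW A) : A :=
  IA.aex fun s : β.dom => IA.times (β.val s) (IA.eqW (β.fam s) α)

/-- `α ⊆_W β := ∀⃗_{t ∈ dom α} (α t → (fam α t ∈_W β))`. -/
noncomputable def subW (IA : ImplicativeAlgebra A) (α β : PreW A) : A :=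
  ⨅ t : α.dom, IA.imp (α.val t) (IA.memW (α.fam t) β)

end ImplicativeAlgebra

/-- The stage `W = W_κ` of the hierarchy: all hereditarily `< κ`-sized elements. -/
def WSet (A : Type u) (κ : Cardinal.{u}) : Type (u + 1) :=
  {w : PreW A // w.HSmall κ}

/-- An element of the domain of `w ∈ W`, as an element of `W`. -/
def WSet.fam {A : Type u} {κ : Cardinal.{u}} (w : WSet A κ) (i : w.1.dom) : WSet A κ :=
  ⟨w.1.fam i, w.2.fam i⟩

/-- Formulas (in context of length `n`) of the first-order language of set theory, with
(de Bruijn-style) variables `Fin n`, binary predicates `∈` and `=`, connectives `⊥`, `∧`, `∨`,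
`→` and quantifiers `∃`, `∀` (binding the last variable of the enlarged context). -/
inductive SetFormula : ℕ → Type
  | bot {n : ℕ} : SetFormula n
  | mem {n : ℕ} (i j : Fin n) : SetFormula n
  | eq {n : ℕ} (i j : Fin n) : SetFormula n
  | and {n : ℕ} (φ ψ : SetFormula n) : SetFormula n
  | or {n : ℕ} (φ ψ : SetFormula n) : SetFormula n
  | imp {n : ℕ} (φ ψ : SetFormula n) : SetFormula n
  | ex {n : ℕ} (φ : SetFormula (n + 1)) : SetFormula n
  | all {n : ℕ} (φ : SetFormula (n + 1)) : SetFormula n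

namespace SetFormula

/-- Renaming of variables (since the only terms of the language of set theory are variables,
substitution is a special case). -/
def rename : {n m : ℕ} → (Fin n → Fin m) → SetFormula n → SetFormula m
  | _, _, _, .bot => .bot
  | _, _, f, .mem i j => .mem (f i) (f j)
  | _, _, f, .eq i j => .eq (f i) (f j)
  | _, _, f, .and φ ψ => .and (φ.rename f) (ψ.rename f)
  | _, _, f, .or φ ψ => .or (φ.rename f) (ψ.rename f)
  | _, _, f, .imp φ ψ => .imp (φ.rename f) (ψ.rename f)
  | _, _, f, .ex φ => .ex (φ.rename (Fin.snoc (Fin.castSucc ∘ f) (Fin.last _)))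
  | _, _, f, .all φ => .all (φ.rename (Fin.snoc (Fin.castSucc ∘ f) (Fin.last _)))

/-- Universal closure `∀x₁ … ∀xₙ φ` of a formula in context of length `n`. -/
def allClose : {n : ℕ} → SetFormula n → SetFormula 0
  | 0, φ => φ
  | _ + 1, φ => allClose (.all φ)

end SetFormula

namespace ImplicativeAlgebra

variable {A : Type u} [CompleteLattice A]

/-- The interpretation `‖φ[x₁,…,xₙ]‖ : Wⁿ → A` of a formula in context, by recursion on the
structure of `φ`:  atomic formulas are interpreted by `∈_W` and `=_W`, `∧` by `×`, `∨` by `+`,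
`→` by `→`, `∃` by `∃⃗` over `W` and `∀` by `∀⃗` (i.e. `⨅`) over `W`. -/
noncomputable def interp (IA : ImplicativeAlgebra A) (κ : Cardinal.{u}) :
    {n : ℕ} → SetFormula n → (Fin n → WSet A κ) → A
  | _, .bot, _ => ⊥
  | _, .mem i j, v => IA.memW (v i).1 (v j).1
  | _, .eq i j, v => IA.eqW (v i).1 (v j).1
  | _, .and φ ψ, v => IA.times (IA.interp κ φ v) (IA.interp κ ψ v)
  | _, .or φ ψ, v => IA.plus (IA.interp κ φ v) (IA.interp κ ψ v)
  | _, .imp φ ψ, v => IA.imp (IA.interp κ φ v) (IA.interp κ ψ v)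
  | _, .ex φ, v => IA.aex fun β : WSet A κ => IA.interp κ φ (Fin.snoc v β)
  | _, .all φ, v => ⨅ β : WSet A κ, IA.interp κ φ (Fin.snoc v β)

end ImplicativeAlgebra

/-- Single-antecedent sequent calculus for intuitionistic first-order logic with equality
over the language of set theory: `Der φ ψ` means the sequent `φ ⊢ ψ` is derivable. -/
inductive Der : {n : ℕ} → SetFormula n → SetFormula n → Prop
  | id {n} (φ : SetFormula n) : Der φ φ
  | cut {n} {φ ψ χ : SetFormula n} : Der φ ψ → Der ψ χ → Der φ χ
  | botE {n} (φ : SetFormula n) : Der .bot φ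
  | andI {n} {φ ψ χ : SetFormula n} : Der φ ψ → Der φ χ → Der φ (ψ.and χ)
  | andE1 {n} (φ ψ : SetFormula n) : Der (φ.and ψ) φ
  | andE2 {n} (φ ψ : SetFormula n) : Der (φ.and ψ) ψ
  | orI1 {n} (φ ψ : SetFormula n) : Der φ (φ.or ψ)
  | orI2 {n} (φ ψ : SetFormula n) : Der ψ (φ.or ψ)
  | orE {n} {φ ψ χ ρ : SetFormula n} :
      Der (φ.and ψ) χ → Der (φ.and ρ) χ → Der (φ.and (ψ.or ρ)) χ
  | impI {n} {φ ψ χ : SetFormula n} : Der (φ.and ψ) χ → Der φ (ψ.imp χ)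
  | impE {n} (φ ψ : SetFormula n) : Der ((φ.imp ψ).and φ) ψ
  | allI {n} {φ : SetFormula n} {ψ : SetFormula (n + 1)} :
      Der (φ.rename Fin.castSucc) ψ → Der φ (.all ψ)
  | allE {n} (φ : SetFormula (n + 1)) (k : Fin n) :
      Der (.all φ) (φ.rename (Fin.snoc (fun i => i) k))
  | exI {n} (φ : SetFormula (n + 1)) (k : Fin n) :
      Der (φ.rename (Fin.snoc (fun i => i) k)) (.ex φ)
  | exE {n} {φ χ : SetFormula n} {ψ : SetFormula (n + 1)} :
      Der ((φ.rename Fin.castSucc).and ψ) (χ.rename Fin.castSucc) →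
      Der (φ.and (.ex ψ)) χ
  | eqRefl {n} (φ : SetFormula n) (i : Fin n) : Der φ (.eq i i)
  | eqSubst {n} (i j : Fin n) (φ : SetFormula n) :
      Der ((SetFormula.eq i j).and φ) (φ.rename fun k => if k = i then j else k)

/-! ### Auxiliary machinery: semantic application and combinatory completeness -/

namespace ImplicativeAlgebra

variable {A : Type u} [CompleteLattice A] (IA : ImplicativeAlgebra A)

/-- Semantic application. -/
def ap (a b : A) : A := sInf {c | a ≤ IA.imp b c}

variable {IA}

theorem ap_le {a b c : A} (h : a ≤ IA.imp b c) : IA.ap a b ≤ c := sInf_le h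

theorem le_imp_ap (a b : A) : a ≤ IA.imp b (IA.ap a b) := by
  rw [ap, IA.imp_sInf]
  exact le_iInf₂ fun c hc => hc

theorem le_imp_of_ap_le {s a b : A} (h : IA.ap s a ≤ b) : s ≤ IA.imp a b :=
  (le_imp_ap s a).trans (IA.imp_monotone h)

theorem ap_mono {a a' b b' : A} (h1 : a ≤ a') (h2 : b ≤ b') :
    IA.ap a b ≤ IA.ap a' b' :=
  ap_le (h1.trans ((le_imp_ap a' b').trans (IA.imp_antitone h2)))

theorem ap_le' {s a b c : A} (h : s ≤ IA.imp b c) (hb : a ≤ b) : IA.ap s a ≤ c :=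
  ap_le (h.trans (IA.imp_antitone hb))

theorem ap_sig {a b : A} (ha : a ∈ IA.Sig) (hb : b ∈ IA.Sig) : IA.ap a b ∈ IA.Sig :=
  IA.Sig_mp (IA.Sig_upward ha (le_imp_ap a b)) hb

theorem imp_iInf {ι : Sort*} (a : A) (f : ι → A) :
    IA.imp a (⨅ i, f i) = ⨅ i, IA.imp a (f i) := by
  rw [← sInf_range, IA.imp_sInf, iInf_range]

/-- The combinator `K` as an element. -/
def kelem (IA : ImplicativeAlgebra A) : A := ⨅ a : A, ⨅ b : A, IA.imp a (IA.imp b a)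

/-- The combinator `S` as an element. -/
def selem (IA : ImplicativeAlgebra A) : A := ⨅ a : A, ⨅ b : A, ⨅ c : A,
    IA.imp (IA.imp a (IA.imp b c)) (IA.imp (IA.imp a b) (IA.imp a c))

theorem kelem_sig : IA.kelem ∈ IA.Sig := IA.Sig_K
theorem selem_sig : IA.selem ∈ IA.Sig := IA.Sig_S

theorem kelem_le (a b : A) : IA.kelem ≤ IA.imp a (IA.imp b a) :=
  (iInf_le _ a).trans (iInf_le _ b)

theorem k_red (a b : A) : IA.ap (IA.ap IA.kelem a) b ≤ a :=
  ap_le (ap_le (kelem_le a b))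

theorem s_red (a b c : A) :
    IA.ap (IA.ap (IA.ap IA.selem a) b) c ≤ IA.ap (IA.ap a c) (IA.ap b c) := by
  set d := IA.ap (IA.ap a c) (IA.ap b c) with hd
  have h1 : a ≤ IA.imp c (IA.imp (IA.ap b c) d) :=
    (le_imp_ap a c).trans (IA.imp_monotone (le_imp_ap _ _))
  have hs : IA.selem ≤ IA.imp (IA.imp c (IA.imp (IA.ap b c) d))
      (IA.imp (IA.imp c (IA.ap b c)) (IA.imp c d)) :=
    (iInf_le _ c).trans ((iInf_le _ (IA.ap b c)).trans (iInf_le _ d))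
  have h2 : IA.ap IA.selem a ≤ IA.imp (IA.imp c (IA.ap b c)) (IA.imp c d) :=
    ap_le (hs.trans (IA.imp_antitone h1))
  exact ap_le (ap_le' h2 (le_imp_ap b c))

/-- The identity combinator. -/
def ielem (IA : ImplicativeAlgebra A) : A := IA.ap (IA.ap IA.selem IA.kelem) IA.kelem

theorem ielem_sig : IA.ielem ∈ IA.Sig := ap_sig (ap_sig selem_sig kelem_sig) kelem_sig

theorem i_red (a : A) : IA.ap IA.ielem a ≤ a :=
  (s_red _ _ _).trans (k_red a (IA.ap IA.kelem a))

/-- Polynomial (combinatory) expressions in `m` variables over elements of the separator. -/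
inductive Poly (IA : ImplicativeAlgebra A) (m : ℕ) : ((Fin m → A) → A) → Prop
  | var (i : Fin m) : Poly IA m fun ρ => ρ i
  | const {c : A} (hc : c ∈ IA.Sig) : Poly IA m fun _ => c
  | app {f g : (Fin m → A) → A} :
      Poly IA m f → Poly IA m g → Poly IA m fun ρ => IA.ap (f ρ) (g ρ)

theorem poly_abs {m : ℕ} {f : (Fin (m + 1) → A) → A} (hf : Poly IA (m + 1) f) :
    ∃ g, Poly IA m g ∧ ∀ (ρ : Fin m → A) (a : A),
      IA.ap (g ρ) a ≤ f (Fin.snoc ρ a) := by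
  induction hf with
  | var i =>
    induction i using Fin.lastCases with
    | last =>
      exact ⟨fun _ => IA.ielem, .const ielem_sig, fun ρ a => by
        simpa using i_red (IA := IA) a⟩
    | cast j =>
      exact ⟨fun ρ => IA.ap IA.kelem (ρ j), .app (.const kelem_sig) (.var j),
        fun ρ a => by simpa using k_red (ρ j) a⟩
  | const hc =>
    exact ⟨fun _ => IA.ap IA.kelem _, .app (.const kelem_sig) (.const hc),
      fun ρ a => k_red _ a⟩
  | app hf hg ihf ihg =>
    obtain ⟨f', hf', hfr⟩ := ihf
    obtain ⟨g', hg', hgr⟩ := ihg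
    exact ⟨fun ρ => IA.ap (IA.ap IA.selem (f' ρ)) (g' ρ),
      .app (.app (.const selem_sig) hf') hg',
      fun ρ a => (s_red _ _ _).trans (ap_mono (hfr ρ a) (hgr ρ a))⟩

theorem poly_sig {f : (Fin 0 → A) → A} (hf : Poly IA 0 f) (ρ : Fin 0 → A) :
    f ρ ∈ IA.Sig := by
  induction hf with
  | var i => exact i.elim0
  | const hc => exact hc
  | app hf hg ihf ihg => exact ap_sig ihf ihg

end ImplicativeAlgebra
namespace ImplicativeAlgebra

variable {A : Type u} [CompleteLattice A] {IA : ImplicativeAlgebra A}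

theorem real1 {f : A → A} (h : Poly IA 1 fun ρ => f (ρ 0)) :
    ∃ s ∈ IA.Sig, ∀ a : A, IA.ap s a ≤ f a := by
  obtain ⟨g, hg, hr⟩ := poly_abs h
  refine ⟨g finZeroElim, poly_sig hg _, fun a => (hr finZeroElim a).trans_eq ?_⟩
  simp [Fin.snoc]

theorem real2 {f : A → A → A} (h : Poly IA 2 fun ρ => f (ρ 0) (ρ 1)) :
    ∃ s ∈ IA.Sig, ∀ a b : A, IA.ap (IA.ap s a) b ≤ f a b := by
  obtain ⟨g1, hg1, hr1⟩ := poly_abs h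
  obtain ⟨g0, hg0, hr0⟩ := poly_abs hg1
  refine ⟨g0 finZeroElim, poly_sig hg0 _, fun a b => ?_⟩
  refine ((ap_mono (hr0 finZeroElim a) le_rfl).trans (hr1 _ b)).trans_eq ?_
  simp [Fin.snoc]

theorem real3 {f : A → A → A → A} (h : Poly IA 3 fun ρ => f (ρ 0) (ρ 1) (ρ 2)) :
    ∃ s ∈ IA.Sig, ∀ a b c : A, IA.ap (IA.ap (IA.ap s a) b) c ≤ f a b c := by
  obtain ⟨g2, hg2, hr2⟩ := poly_abs h
  obtain ⟨g1, hg1, hr1⟩ := poly_abs hg2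
  obtain ⟨g0, hg0, hr0⟩ := poly_abs hg1
  refine ⟨g0 finZeroElim, poly_sig hg0 _, fun a b c => ?_⟩
  refine (((ap_mono (ap_mono (hr0 finZeroElim a) le_rfl) le_rfl).trans
    (ap_mono (hr1 _ b) le_rfl)).trans (hr2 _ c)).trans_eq ?_
  simp [Fin.snoc]

theorem real4 {f : A → A → A → A → A} (h : Poly IA 4 fun ρ => f (ρ 0) (ρ 1) (ρ 2) (ρ 3)) :
    ∃ s ∈ IA.Sig, ∀ a b c d : A, IA.ap (IA.ap (IA.ap (IA.ap s a) b) c) d ≤ f a b c d := by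
  obtain ⟨g3, hg3, hr3⟩ := poly_abs h
  obtain ⟨g2, hg2, hr2⟩ := poly_abs hg3
  obtain ⟨g1, hg1, hr1⟩ := poly_abs hg2
  obtain ⟨g0, hg0, hr0⟩ := poly_abs hg1
  refine ⟨g0 finZeroElim, poly_sig hg0 _, fun a b c d => ?_⟩
  refine ((((ap_mono (ap_mono (ap_mono (hr0 finZeroElim a) le_rfl) le_rfl) le_rfl).trans
    (ap_mono (ap_mono (hr1 _ b) le_rfl) le_rfl)).trans
    (ap_mono (hr2 _ c) le_rfl)).trans (hr3 _ d)).trans_eq ?_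
  norm_num [Fin.snoc, show ((3:Fin 4):ℕ)=3 from rfl]

end ImplicativeAlgebra
namespace ImplicativeAlgebra

variable {A : Type u} [CompleteLattice A] {IA : ImplicativeAlgebra A}

theorem times_mono {a a' b b' : A} (ha : a ≤ a') (hb : b ≤ b') :
    IA.times a b ≤ IA.times a' b' :=
  le_iInf fun x => (iInf_le _ x).trans
    (IA.imp_antitone ((IA.imp_antitone ha).trans (IA.imp_monotone (IA.imp_antitone hb))) )

theorem times_le_imp (a b x : A) : IA.times a b ≤ IA.imp (IA.imp a (IA.imp b x)) x :=
  iInf_le _ x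

/-- A pairing combinator. -/
theorem exists_pp : ∃ pp ∈ IA.Sig, ∀ a b : A, IA.ap (IA.ap pp a) b ≤ IA.times a b := by
  obtain ⟨pp, hpp, hr⟩ := real3 (IA := IA) (f := fun a b q => IA.ap (IA.ap q a) b)
    (.app (.app (.var 2) (.var 0)) (.var 1))
  refine ⟨pp, hpp, fun a b => le_iInf fun x => le_imp_of_ap_le ?_⟩
  exact (hr a b _).trans (ap_le (ap_le le_rfl))

/-- First projection. -/
theorem exists_fst : ∃ fp ∈ IA.Sig, ∀ a b : A, IA.ap fp (IA.times a b) ≤ a := by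
  obtain ⟨fp, hfp, hr⟩ := real1 (IA := IA) (f := fun p => IA.ap p IA.kelem)
    (.app (.var 0) (.const kelem_sig))
  exact ⟨fp, hfp, fun a b => (hr _).trans
    (ap_le ((times_le_imp a b a).trans (IA.imp_antitone (kelem_le a b))))⟩

/-- Second projection. -/
theorem exists_snd : ∃ sp ∈ IA.Sig, ∀ a b : A, IA.ap sp (IA.times a b) ≤ b := by
  have hki : ∀ a b : A, IA.ap IA.kelem IA.ielem ≤ IA.imp a (IA.imp b b) := by
    intro a b
    refine le_imp_of_ap_le (le_imp_of_ap_le ?_)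
    exact (ap_mono (k_red IA.ielem a) le_rfl).trans (i_red b)
  obtain ⟨sp, hsp, hr⟩ := real1 (IA := IA) (f := fun p => IA.ap p (IA.ap IA.kelem IA.ielem))
    (.app (.var 0) (.const (ap_sig kelem_sig ielem_sig)))
  exact ⟨sp, hsp, fun a b => (hr _).trans
    (ap_le ((times_le_imp a b b).trans (IA.imp_antitone (hki a b))))⟩

/-- Turing's fixed point combinator. -/
theorem exists_theta : ∃ th ∈ IA.Sig, ∀ f : A, IA.ap th f ≤ IA.ap f (IA.ap th f) := by
  obtain ⟨T, hT, hr⟩ := real2 (IA := IA) (f := fun x y => IA.ap y (IA.ap (IA.ap x x) y))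
    (.app (.var 1) (.app (.app (.var 0) (.var 0)) (.var 1)))
  exact ⟨IA.ap T T, ap_sig hT hT, fun f => hr T f⟩

theorem sigle_intro {ι : Sort*} {f g : ι → A} {s : A} (hs : s ∈ IA.Sig)
    (h : ∀ i, IA.ap s (f i) ≤ g i) : IA.SigLe f g :=
  IA.Sig_upward hs (le_iInf fun i => le_imp_of_ap_le (h i))

theorem sigle_elem {ι : Sort*} {f g : ι → A} (h : IA.SigLe f g) :
    ∃ C ∈ IA.Sig, ∀ i, C ≤ IA.imp (f i) (g i) :=
  ⟨_, h, fun i => iInf_le _ i⟩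

theorem sigle_refl {ι : Sort*} (f : ι → A) : IA.SigLe f f :=
  sigle_intro ielem_sig fun i => i_red (f i)

theorem sigle_trans {ι : Sort*} {f g h : ι → A} (h1 : IA.SigLe f g) (h2 : IA.SigLe g h) :
    IA.SigLe f h := by
  obtain ⟨F, hF, hFle⟩ := sigle_elem h1
  obtain ⟨G, hG, hGle⟩ := sigle_elem h2
  obtain ⟨s, hs, hr⟩ := real1 (IA := IA) (f := fun x => IA.ap G (IA.ap F x))
    (.app (.const hG) (.app (.const hF) (.var 0)))
  exact sigle_intro hs fun i => (hr _).trans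
    (ap_le' (hGle i) (ap_le (hFle i)))

theorem sigle_curry {ι : Sort*} {f g h : ι → A}
    (hc : IA.SigLe (fun i => IA.times (f i) (g i)) h) :
    IA.SigLe f fun i => IA.imp (g i) (h i) := by
  obtain ⟨E, hE, hEle⟩ := sigle_elem hc
  obtain ⟨pp, hpp, hppr⟩ := exists_pp (IA := IA)
  obtain ⟨s, hs, hr⟩ := real2 (IA := IA)
    (f := fun a b => IA.ap E (IA.ap (IA.ap pp a) b))
    (.app (.const hE) (.app (.app (.const hpp) (.var 0)) (.var 1)))
  refine IA.Sig_upward hs (le_iInf fun i => le_imp_of_ap_le (le_imp_of_ap_le ?_))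
  exact (hr _ _).trans (ap_le' (hEle i) (hppr _ _))

theorem sigle_uncurry {ι : Sort*} {f g h : ι → A}
    (hc : IA.SigLe f fun i => IA.imp (g i) (h i)) :
    IA.SigLe (fun i => IA.times (f i) (g i)) h := by
  obtain ⟨C, hC, hCle⟩ := sigle_elem hc
  obtain ⟨s, hs, hr⟩ := real1 (IA := IA) (f := fun p => IA.ap p C)
    (.app (.var 0) (.const hC))
  refine sigle_intro hs fun i => (hr _).trans
    (ap_le ((times_le_imp (f i) (g i) (h i)).trans (IA.imp_antitone (hCle i))))

end ImplicativeAlgebra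
namespace ImplicativeAlgebra

variable {A : Type u} [CompleteLattice A] {IA : ImplicativeAlgebra A}

theorem eqW_def (α β : PreW A) :
    IA.eqW α β = IA.times (IA.subW α β) (IA.subW β α) := by
  cases α with | mk ι₁ f₁ v₁ =>
  cases β with | mk ι₂ f₂ v₂ =>
  rw [eqW]
  rfl

end ImplicativeAlgebra

namespace ImplicativeAlgebra

variable {A : Type u} [CompleteLattice A] {IA : ImplicativeAlgebra A}

theorem exists_refl : ∃ e ∈ IA.Sig, ∀ α : PreW A, e ≤ IA.eqW α α := by
  obtain ⟨pp, hpp, hppr⟩ := exists_pp (IA := IA)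
  obtain ⟨th, hth, hthr⟩ := exists_theta (IA := IA)
  obtain ⟨d, hd, hdr⟩ := real3 (f := fun e' a q => IA.ap q (IA.ap (IA.ap pp a) e'))
    (.app (.var 2) (.app (.app (.const hpp) (.var 1)) (.var 0)))
  obtain ⟨G, hG, hGr⟩ := real2 (f := fun e' m => IA.ap (IA.ap m (IA.ap d e')) (IA.ap d e'))
    (.app (.app (.var 1) (.app (.const hd) (.var 0))) (.app (.const hd) (.var 0)))
  refine ⟨IA.ap th G, ap_sig hth hG, fun α => ?_⟩
  set e := IA.ap th G with he
  have he_unfold : ∀ m : A, IA.ap e m ≤ IA.ap (IA.ap m (IA.ap d e)) (IA.ap d e) :=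
    fun m => (ap_mono (hthr G) le_rfl).trans (hGr e m)
  induction α with
  | mk ι f v ih =>
    have hdu : IA.ap d e ≤ IA.subW (PreW.mk ι f v) (PreW.mk ι f v) := by
      refine le_iInf fun t => le_imp_of_ap_le ?_
      simp only [memW, aex]
      refine le_iInf fun x' => le_imp_of_ap_le ?_
      refine (hdr e (v t) _).trans (ap_le' (iInf_le _ t) ?_)
      exact (hppr _ _).trans (times_mono le_rfl (ih t))
    rw [eqW_def]
    refine le_iInf fun x => le_imp_of_ap_le ?_
    exact (he_unfold _).trans (ap_le' (ap_le' le_rfl hdu) hdu)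

end ImplicativeAlgebra
theorem PreW.rank_fam_lt {A : Type u} (w : PreW A) (i : w.dom) :
    (w.fam i).rank < w.rank := by
  cases w with | mk ι f v => exact PreW.rank_lt_mk f v i

namespace ImplicativeAlgebra

variable {A : Type u} [CompleteLattice A] {IA : ImplicativeAlgebra A}

theorem subW_le (α β : PreW A) (t : α.dom) :
    IA.subW α β ≤ IA.imp (α.val t) (IA.memW (α.fam t) β) := iInf_le _ t

theorem memW_le (δ β : PreW A) (x : A) :
    IA.memW δ β ≤ IA.imp
      (⨅ s : β.dom, IA.imp (IA.times (β.val s) (IA.eqW (β.fam s) δ)) x) x := by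
  rw [memW, aex]; exact iInf_le _ x

theorem le_subW {a : A} {α β : PreW A}
    (h : ∀ t : α.dom, a ≤ IA.imp (α.val t) (IA.memW (α.fam t) β)) :
    a ≤ IA.subW α β := le_iInf h

theorem le_memW {a : A} {δ β : PreW A}
    (h : ∀ x : A, a ≤ IA.imp
      (⨅ s : β.dom, IA.imp (IA.times (β.val s) (IA.eqW (β.fam s) δ)) x) x) :
    a ≤ IA.memW δ β := by rw [memW, aex]; exact le_iInf h

theorem exists_eq_tools : ∃ tt ∈ IA.Sig, ∃ ww ∈ IA.Sig, ∃ mm ∈ IA.Sig,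
    (∀ α β γ : PreW A, IA.ap (IA.ap tt (IA.eqW α β)) (IA.eqW β γ) ≤ IA.eqW α γ) ∧
    (∀ δ' δ γ : PreW A,
      IA.ap (IA.ap ww (IA.eqW δ' δ)) (IA.memW δ' γ) ≤ IA.memW δ γ) ∧
    (∀ δ β γ : PreW A,
      IA.ap (IA.ap mm (IA.memW δ β)) (IA.subW β γ) ≤ IA.memW δ γ) := by
  obtain ⟨pp, hpp, hppr⟩ := exists_pp (IA := IA)
  obtain ⟨fp, hfp, hfpr⟩ := exists_fst (IA := IA)
  obtain ⟨sp, hsp, hspr⟩ := exists_snd (IA := IA)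
  obtain ⟨th, hth, hthr⟩ := exists_theta (IA := IA)
  obtain ⟨h', hh', hh'r⟩ := real4
    (f := fun t' e pr k => IA.ap k (IA.ap (IA.ap pp (IA.ap fp pr))
      (IA.ap (IA.ap t' (IA.ap sp pr)) e)))
    (.app (.var 3) (.app (.app (.const hpp) (.app (.const hfp) (.var 2)))
      (.app (.app (.var 0) (.app (.const hsp) (.var 2))) (.var 1))))
  obtain ⟨w', hw', hw'r⟩ := real3
    (f := fun t' e p => IA.ap p (IA.ap (IA.ap h' t') e))
    (.app (.var 2) (.app (.app (.const hh') (.var 0)) (.var 1)))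
  obtain ⟨hc', hhc', hhc'r⟩ := real3
    (f := fun t' q pr => IA.ap (IA.ap (IA.ap w' t') (IA.ap sp pr))
      (IA.ap q (IA.ap fp pr)))
    (.app (.app (.app (.const hw') (.var 0)) (.app (.const hsp) (.var 2)))
      (.app (.var 1) (.app (.const hfp) (.var 2))))
  obtain ⟨m', hm', hm'r⟩ := real3
    (f := fun t' p q => IA.ap p (IA.ap (IA.ap hc' t') q))
    (.app (.var 1) (.app (.app (.const hhc') (.var 0)) (.var 2)))
  obtain ⟨s', hs', hs'r⟩ := real4
    (f := fun t' p q a => IA.ap (IA.ap (IA.ap m' t') (IA.ap p a)) q)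
    (.app (.app (.app (.const hm') (.var 0)) (.app (.var 1) (.var 3))) (.var 2))
  obtain ⟨G, hG, hGr⟩ := real3
    (f := fun t' p q => IA.ap (IA.ap pp
      (IA.ap (IA.ap (IA.ap s' t') (IA.ap fp p)) (IA.ap fp q)))
      (IA.ap (IA.ap (IA.ap s' t') (IA.ap sp q)) (IA.ap sp p)))
    (.app (.app (.const hpp) (.app (.app (.app (.const hs') (.var 0))
        (.app (.const hfp) (.var 1))) (.app (.const hfp) (.var 2))))
      (.app (.app (.app (.const hs') (.var 0)) (.app (.const hsp) (.var 2)))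
        (.app (.const hsp) (.var 1))))
  have tt_unfold : ∀ p q : A, IA.ap (IA.ap (IA.ap th G) p) q ≤
      IA.ap (IA.ap pp (IA.ap (IA.ap (IA.ap s' (IA.ap th G)) (IA.ap fp p)) (IA.ap fp q)))
        (IA.ap (IA.ap (IA.ap s' (IA.ap th G)) (IA.ap sp q)) (IA.ap sp p)) :=
    fun p q => (ap_mono (ap_mono (hthr G) le_rfl) le_rfl).trans (hGr (IA.ap th G) p q)
  have hw_bound : ∀ δ' δ γ : PreW A,
      (∀ s : γ.dom, IA.ap (IA.ap (IA.ap th G) (IA.eqW (γ.fam s) δ'))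
        (IA.eqW δ' δ) ≤ IA.eqW (γ.fam s) δ) →
      IA.ap (IA.ap (IA.ap w' (IA.ap th G)) (IA.eqW δ' δ)) (IA.memW δ' γ) ≤
        IA.memW δ γ := by
    intro δ' δ γ ht
    refine (hw'r _ _ _).trans (ap_le' (memW_le δ' γ (IA.memW δ γ)) ?_)
    refine le_iInf fun s => le_imp_of_ap_le ?_
    refine le_memW fun x => le_imp_of_ap_le ((hh'r _ _ _ _).trans (ap_le' (iInf_le _ s) ?_))
    have h2 : IA.ap (IA.ap (IA.ap th G)
        (IA.ap sp (IA.times (γ.val s) (IA.eqW (γ.fam s) δ')))) (IA.eqW δ' δ) ≤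
        IA.eqW (γ.fam s) δ :=
      (ap_mono (ap_mono le_rfl (hspr _ _)) le_rfl).trans (ht s)
    exact (ap_mono (ap_mono le_rfl (hfpr _ _)) h2).trans (hppr _ _)
  have hm_bound : ∀ δ β γ : PreW A,
      (∀ s : β.dom, IA.ap (IA.ap (IA.ap w' (IA.ap th G)) (IA.eqW (β.fam s) δ))
        (IA.memW (β.fam s) γ) ≤ IA.memW δ γ) →
      IA.ap (IA.ap (IA.ap m' (IA.ap th G)) (IA.memW δ β)) (IA.subW β γ) ≤
        IA.memW δ γ := by
    intro δ β γ hw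
    refine (hm'r _ _ _).trans (ap_le' (memW_le δ β (IA.memW δ γ))
      (le_iInf fun s => le_imp_of_ap_le ((hhc'r _ _ _).trans ?_)))
    have h2 : IA.ap (IA.subW β γ)
        (IA.ap fp (IA.times (β.val s) (IA.eqW (β.fam s) δ))) ≤
        IA.memW (β.fam s) γ :=
      ap_le' (subW_le β γ s) (hfpr _ _)
    exact (ap_mono (ap_mono le_rfl (hspr _ _)) h2).trans (hw s)
  have hs_bound : ∀ α β γ : PreW A,
      (∀ t : α.dom, IA.ap (IA.ap (IA.ap m' (IA.ap th G)) (IA.memW (α.fam t) β))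
        (IA.subW β γ) ≤ IA.memW (α.fam t) γ) →
      IA.ap (IA.ap (IA.ap s' (IA.ap th G)) (IA.subW α β)) (IA.subW β γ) ≤
        IA.subW α γ := by
    intro α β γ hm
    refine le_subW fun t => le_imp_of_ap_le ((hs'r _ _ _ _).trans ?_)
    exact (ap_mono (ap_mono le_rfl (ap_le (subW_le α β t))) le_rfl).trans (hm t)
  have ht_bound : ∀ α β γ : PreW A,
      IA.ap (IA.ap (IA.ap s' (IA.ap th G)) (IA.subW α β)) (IA.subW β γ) ≤
        IA.subW α γ →
      IA.ap (IA.ap (IA.ap s' (IA.ap th G)) (IA.subW γ β)) (IA.subW β α) ≤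
        IA.subW γ α →
      IA.ap (IA.ap (IA.ap th G) (IA.eqW α β)) (IA.eqW β γ) ≤ IA.eqW α γ := by
    intro α β γ hs1 hs2
    have hfp1 : IA.ap fp (IA.eqW α β) ≤ IA.subW α β := by
      rw [eqW_def]; exact hfpr _ _
    have hfp2 : IA.ap fp (IA.eqW β γ) ≤ IA.subW β γ := by
      rw [eqW_def]; exact hfpr _ _
    have hsp1 : IA.ap sp (IA.eqW α β) ≤ IA.subW β α := by
      rw [eqW_def]; exact hspr _ _
    have hsp2 : IA.ap sp (IA.eqW β γ) ≤ IA.subW γ β := by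
      rw [eqW_def]; exact hspr _ _
    have e1 := (ap_mono (ap_mono (le_refl (IA.ap s' (IA.ap th G))) hfp1) hfp2).trans hs1
    have e2 := (ap_mono (ap_mono (le_refl (IA.ap s' (IA.ap th G))) hsp2) hsp1).trans hs2
    refine (tt_unfold _ _).trans ?_
    rw [eqW_def α γ]
    exact (ap_mono (ap_mono le_rfl e1) e2).trans (hppr _ _)
  have main : ∀ o : Ordinal.{u}, ∀ α β γ : PreW A, max (max α.rank β.rank) γ.rank = o →
      IA.ap (IA.ap (IA.ap th G) (IA.eqW α β)) (IA.eqW β γ) ≤ IA.eqW α γ := by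
    intro o
    induction o using Ordinal.induction with
    | h o IH =>
      intro α β γ ho
      subst ho
      have hα : ∀ t, (α.fam t).rank < max (max α.rank β.rank) γ.rank := fun t =>
        (PreW.rank_fam_lt α t).trans_le (le_max_of_le_left (le_max_left _ _))
      have hβ : ∀ t, (β.fam t).rank < max (max α.rank β.rank) γ.rank := fun t =>
        (PreW.rank_fam_lt β t).trans_le (le_max_of_le_left (le_max_right _ _))
      have hγ : ∀ t, (γ.fam t).rank < max (max α.rank β.rank) γ.rank := fun t =>
        (PreW.rank_fam_lt γ t).trans_le (le_max_right _ _)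
      exact ht_bound α β γ
        (hs_bound α β γ fun t => hm_bound _ β γ fun s => hw_bound _ _ γ fun s' =>
          IH _ (max_lt (max_lt (hγ s') (hβ s)) (hα t)) _ _ _ rfl)
        (hs_bound γ β α fun t => hm_bound _ β α fun s => hw_bound _ _ α fun s' =>
          IH _ (max_lt (max_lt (hα s') (hβ s)) (hγ t)) _ _ _ rfl)
  have trans_all : ∀ α β γ : PreW A,
      IA.ap (IA.ap (IA.ap th G) (IA.eqW α β)) (IA.eqW β γ) ≤ IA.eqW α γ :=
    fun α β γ => main _ α β γ rfl
  have w_all : ∀ δ' δ γ : PreW A,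
      IA.ap (IA.ap (IA.ap w' (IA.ap th G)) (IA.eqW δ' δ)) (IA.memW δ' γ) ≤
        IA.memW δ γ :=
    fun δ' δ γ => hw_bound δ' δ γ fun s => trans_all _ _ _
  have m_all : ∀ δ β γ : PreW A,
      IA.ap (IA.ap (IA.ap m' (IA.ap th G)) (IA.memW δ β)) (IA.subW β γ) ≤
        IA.memW δ γ :=
    fun δ β γ => hm_bound δ β γ fun s => w_all _ _ _
  exact ⟨IA.ap th G, ap_sig hth hG, IA.ap w' (IA.ap th G),
    ap_sig hw' (ap_sig hth hG), IA.ap m' (IA.ap th G),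
    ap_sig hm' (ap_sig hth hG), trans_all, w_all, m_all⟩

theorem exists_symm : ∃ sy ∈ IA.Sig, ∀ α β : PreW A,
    IA.ap sy (IA.eqW α β) ≤ IA.eqW β α := by
  obtain ⟨pp, hpp, hppr⟩ := exists_pp (IA := IA)
  obtain ⟨pw, hpw, hpwr⟩ := real2 (IA := IA) (f := fun a b => IA.ap (IA.ap pp b) a)
    (.app (.app (.const hpp) (.var 1)) (.var 0))
  obtain ⟨sy, hsy, hsyr⟩ := real1 (IA := IA) (f := fun p => IA.ap p pw)
    (.app (.var 0) (.const hpw))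
  refine ⟨sy, hsy, fun α β => ?_⟩
  rw [eqW_def α β, eqW_def β α]
  refine (hsyr _).trans (ap_le ((times_le_imp _ _ _).trans (IA.imp_antitone ?_)))
  refine le_imp_of_ap_le (le_imp_of_ap_le ?_)
  exact (hpwr _ _).trans (hppr _ _)

end ImplicativeAlgebra
section FinLemmas

variable {W : Type*}

theorem snoc_comp_ren {m n : ℕ} (f : Fin n → Fin m) (v : Fin m → W) (β : W) :
    (Fin.snoc v β : Fin (m+1) → W) ∘
      (Fin.snoc (Fin.castSucc ∘ f) (Fin.last m) : Fin (n+1) → Fin (m+1)) =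
    Fin.snoc (v ∘ f) β := by
  funext x
  induction x using Fin.lastCases with
  | last => simp
  | cast j => simp

theorem comp_snoc_id {n : ℕ} (v : Fin n → W) (k : Fin n) :
    v ∘ (Fin.snoc (fun i => i) k : Fin (n+1) → Fin n) = Fin.snoc v (v k) := by
  funext x
  induction x using Fin.lastCases with
  | last => simp
  | cast j => simp

theorem comp_ite {n : ℕ} (v : Fin n → W) (i j : Fin n) :
    (v ∘ fun k => if k = i then j else k) = fun k => if k = i then v j else v k := by
  funext k
  by_cases h : k = i <;> simp [h]

theorem snoc_ite {n : ℕ} (v : Fin n → W) (i j : Fin n) (β : W) :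
    (fun k => if k = Fin.castSucc i then
        (Fin.snoc v β : Fin (n+1) → W) (Fin.castSucc j)
      else (Fin.snoc v β : Fin (n+1) → W) k) =
    Fin.snoc (fun k => if k = i then v j else v k) β := by
  funext x
  induction x using Fin.lastCases with
  | last => simp [if_neg (Fin.castSucc_lt_last i).ne']
  | cast m => by_cases h : m = i <;> simp [h, Fin.castSucc_inj]

end FinLemmas

namespace ImplicativeAlgebra

variable {A : Type u} [CompleteLattice A] {IA : ImplicativeAlgebra A} {κ : Cardinal.{u}}

theorem interp_rename : ∀ {n m : ℕ} (φ : SetFormula n) (f : Fin n → Fin m)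
    (v : Fin m → WSet A κ),
    IA.interp κ (φ.rename f) v = IA.interp κ φ (v ∘ f) := by
  intro n m φ
  induction φ generalizing m with
  | bot => intro f v; rfl
  | mem i j => intro f v; rfl
  | eq i j => intro f v; rfl
  | and φ ψ ihφ ihψ => intro f v
                       simp only [SetFormula.rename, interp, ihφ, ihψ]
  | or φ ψ ihφ ihψ => intro f v
                      simp only [SetFormula.rename, interp, ihφ, ihψ]
  | imp φ ψ ihφ ihψ => intro f v
                       simp only [SetFormula.rename, interp, ihφ, ihψ]
  | ex φ ih => intro f v
               simp only [SetFormula.rename, interp]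
               congr 1
               funext β
               rw [ih, snoc_comp_ren]
  | all φ ih => intro f v
                simp only [SetFormula.rename, interp]
                congr 1
                funext β
                rw [ih, snoc_comp_ren]

end ImplicativeAlgebra
namespace ImplicativeAlgebra

variable {A : Type u} [CompleteLattice A] {IA : ImplicativeAlgebra A} {κ : Cardinal.{u}}

theorem aex_le {ι : Sort*} (g : ι → A) (x : A) :
    IA.aex g ≤ IA.imp (⨅ i, IA.imp (g i) x) x := by
  rw [aex]; exact iInf_le _ x

theorem le_aex {a : A} {ι : Sort*} {g : ι → A}
    (h : ∀ x : A, a ≤ IA.imp (⨅ i, IA.imp (g i) x) x) : a ≤ IA.aex g := by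
  rw [aex]; exact le_iInf h

theorem le_times {a b c : A} (h : ∀ x : A, c ≤ IA.imp (IA.imp a (IA.imp b x)) x) :
    c ≤ IA.times a b := by
  rw [times]; exact le_iInf h

theorem plus_le (a b x : A) :
    IA.plus a b ≤ IA.imp (IA.imp a x) (IA.imp (IA.imp b x) x) := by
  rw [plus]; exact iInf_le _ x

theorem le_plus {a b c : A} (h : ∀ x : A, c ≤ IA.imp (IA.imp a x) (IA.imp (IA.imp b x) x)) :
    c ≤ IA.plus a b := by
  rw [plus]; exact le_iInf h

theorem leibniz {n : ℕ} (φ : SetFormula n) : ∀ i j : Fin n,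
    ∃ L ∈ IA.Sig, ∃ L' ∈ IA.Sig, ∀ v : Fin n → WSet A κ,
      IA.ap (IA.ap L (IA.eqW (v i).1 (v j).1)) (IA.interp κ φ v) ≤
        IA.interp κ φ (fun k => if k = i then v j else v k) ∧
      IA.ap (IA.ap L' (IA.eqW (v i).1 (v j).1))
          (IA.interp κ φ (fun k => if k = i then v j else v k)) ≤
        IA.interp κ φ v := by
  obtain ⟨tt, htt, ww, hww, mm, hmm, t_all, w_all, m_all⟩ :=
    exists_eq_tools (IA := IA)
  obtain ⟨sy, hsy, syr⟩ := exists_symm (IA := IA)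
  obtain ⟨pp, hpp, ppr⟩ := exists_pp (IA := IA)
  obtain ⟨fp, hfp, fpr⟩ := exists_fst (IA := IA)
  obtain ⟨sp, hsp, spr⟩ := exists_snd (IA := IA)
  have idL : ∃ L ∈ IA.Sig, ∀ x y : A, IA.ap (IA.ap L x) y ≤ y :=
    ⟨IA.ap IA.kelem IA.ielem, ap_sig kelem_sig ielem_sig,
      fun x y => (ap_mono (k_red _ _) le_rfl).trans (i_red y)⟩
  have fp_eq : ∀ α β : PreW A, IA.ap fp (IA.eqW α β) ≤ IA.subW α β := fun α β => by
    rw [eqW_def]; exact fpr _ _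
  induction φ with
  | bot =>
    intro i j
    obtain ⟨L, hL, hLr⟩ := idL
    exact ⟨L, hL, L, hL, fun v => ⟨hLr _ _, hLr _ _⟩⟩
  | mem a b =>
    intro i j
    by_cases hai : a = i
    · subst hai
      by_cases hbi : b = a
      · subst hbi
        obtain ⟨L, hL, hLr⟩ := real2 (IA := IA)
          (f := fun e p => IA.ap (IA.ap ww e) (IA.ap (IA.ap mm p) (IA.ap fp e)))
          (.app (.app (.const hww) (.var 0)) (.app (.app (.const hmm) (.var 1))
            (.app (.const hfp) (.var 0))))
        obtain ⟨L', hL', hL'r⟩ := real2 (IA := IA)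
          (f := fun e p => IA.ap (IA.ap ww (IA.ap sy e))
            (IA.ap (IA.ap mm p) (IA.ap fp (IA.ap sy e))))
          (.app (.app (.const hww) (.app (.const hsy) (.var 0)))
            (.app (.app (.const hmm) (.var 1))
              (.app (.const hfp) (.app (.const hsy) (.var 0)))))
        refine ⟨L, hL, L', hL', fun v => ?_⟩
        simp only [interp, if_pos rfl]
        constructor
        · refine (hLr _ _).trans ?_
          have h1 : IA.ap (IA.ap mm (IA.memW (v b).1 (v b).1))
              (IA.ap fp (IA.eqW (v b).1 (v j).1)) ≤ IA.memW (v b).1 (v j).1 :=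
            (ap_mono le_rfl (fp_eq _ _)).trans (m_all _ _ _)
          exact (ap_mono le_rfl h1).trans (w_all _ _ _)
        · refine (hL'r _ _).trans ?_
          have h0 : IA.ap sy (IA.eqW (v b).1 (v j).1) ≤ IA.eqW (v j).1 (v b).1 :=
            syr _ _
          have h1 : IA.ap (IA.ap mm (IA.memW (v j).1 (v j).1))
              (IA.ap fp (IA.ap sy (IA.eqW (v b).1 (v j).1))) ≤
              IA.memW (v j).1 (v b).1 :=
            (ap_mono le_rfl ((ap_mono le_rfl h0).trans (fp_eq _ _))).trans (m_all _ _ _)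
          exact (ap_mono (ap_mono le_rfl h0) h1).trans (w_all _ _ _)
      · obtain ⟨L, hL, hLr⟩ := real2 (IA := IA)
          (f := fun e p => IA.ap (IA.ap ww e) p)
          (.app (.app (.const hww) (.var 0)) (.var 1))
        obtain ⟨L', hL', hL'r⟩ := real2 (IA := IA)
          (f := fun e p => IA.ap (IA.ap ww (IA.ap sy e)) p)
          (.app (.app (.const hww) (.app (.const hsy) (.var 0))) (.var 1))
        refine ⟨L, hL, L', hL', fun v => ?_⟩
        simp only [interp, if_pos rfl, if_neg hbi]
        constructor
        · exact (hLr _ _).trans (w_all _ _ _)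
        · exact (hL'r _ _).trans ((ap_mono (ap_mono le_rfl (syr _ _)) le_rfl).trans
            (w_all _ _ _))
    · by_cases hbi : b = i
      · subst hbi
        obtain ⟨L, hL, hLr⟩ := real2 (IA := IA)
          (f := fun e p => IA.ap (IA.ap mm p) (IA.ap fp e))
          (.app (.app (.const hmm) (.var 1)) (.app (.const hfp) (.var 0)))
        obtain ⟨L', hL', hL'r⟩ := real2 (IA := IA)
          (f := fun e p => IA.ap (IA.ap mm p) (IA.ap fp (IA.ap sy e)))
          (.app (.app (.const hmm) (.var 1))
            (.app (.const hfp) (.app (.const hsy) (.var 0))))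
        refine ⟨L, hL, L', hL', fun v => ?_⟩
        simp only [interp, if_pos rfl, if_neg hai]
        constructor
        · exact (hLr _ _).trans ((ap_mono le_rfl (fp_eq _ _)).trans (m_all _ _ _))
        · exact (hL'r _ _).trans ((ap_mono le_rfl
            ((ap_mono le_rfl (syr _ _)).trans (fp_eq _ _))).trans (m_all _ _ _))
      · obtain ⟨L, hL, hLr⟩ := idL
        refine ⟨L, hL, L, hL, fun v => ?_⟩
        simp only [interp, if_neg hai, if_neg hbi]
        exact ⟨hLr _ _, hLr _ _⟩
  | eq a b =>
    intro i j
    by_cases hai : a = i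
    · subst hai
      by_cases hbi : b = a
      · subst hbi
        obtain ⟨L, hL, hLr⟩ := real2 (IA := IA)
          (f := fun e p => IA.ap (IA.ap tt (IA.ap sy e)) e)
          (.app (.app (.const htt) (.app (.const hsy) (.var 0))) (.var 0))
        obtain ⟨L', hL', hL'r⟩ := real2 (IA := IA)
          (f := fun e p => IA.ap (IA.ap tt e) (IA.ap sy e))
          (.app (.app (.const htt) (.var 0)) (.app (.const hsy) (.var 0)))
        refine ⟨L, hL, L', hL', fun v => ?_⟩
        simp only [interp, if_pos rfl]
        constructor
        · exact (hLr _ _).trans ((ap_mono (ap_mono le_rfl (syr _ _)) le_rfl).trans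
            (t_all _ _ _))
        · exact (hL'r _ _).trans ((ap_mono le_rfl (syr _ _)).trans (t_all _ _ _))
      · obtain ⟨L, hL, hLr⟩ := real2 (IA := IA)
          (f := fun e p => IA.ap (IA.ap tt (IA.ap sy e)) p)
          (.app (.app (.const htt) (.app (.const hsy) (.var 0))) (.var 1))
        obtain ⟨L', hL', hL'r⟩ := real2 (IA := IA)
          (f := fun e p => IA.ap (IA.ap tt e) p)
          (.app (.app (.const htt) (.var 0)) (.var 1))
        refine ⟨L, hL, L', hL', fun v => ?_⟩
        simp only [interp, if_pos rfl, if_neg hbi]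
        constructor
        · exact (hLr _ _).trans ((ap_mono (ap_mono le_rfl (syr _ _)) le_rfl).trans
            (t_all _ _ _))
        · exact (hL'r _ _).trans (t_all _ _ _)
    · by_cases hbi : b = i
      · subst hbi
        obtain ⟨L, hL, hLr⟩ := real2 (IA := IA)
          (f := fun e p => IA.ap (IA.ap tt p) e)
          (.app (.app (.const htt) (.var 1)) (.var 0))
        obtain ⟨L', hL', hL'r⟩ := real2 (IA := IA)
          (f := fun e p => IA.ap (IA.ap tt p) (IA.ap sy e))
          (.app (.app (.const htt) (.var 1)) (.app (.const hsy) (.var 0)))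
        refine ⟨L, hL, L', hL', fun v => ?_⟩
        simp only [interp, if_pos rfl, if_neg hai]
        constructor
        · exact (hLr _ _).trans (t_all _ _ _)
        · exact (hL'r _ _).trans ((ap_mono le_rfl (syr _ _)).trans (t_all _ _ _))
      · obtain ⟨L, hL, hLr⟩ := idL
        refine ⟨L, hL, L, hL, fun v => ?_⟩
        simp only [interp, if_neg hai, if_neg hbi]
        exact ⟨hLr _ _, hLr _ _⟩
  | and φ ψ ihφ ihψ =>
    intro i j
    obtain ⟨L1, hL1, L1', hL1', h1⟩ := ihφ i j
    obtain ⟨L2, hL2, L2', hL2', h2⟩ := ihψ i j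
    obtain ⟨L, hL, hLr⟩ := real2 (IA := IA)
      (f := fun e p => IA.ap (IA.ap pp (IA.ap (IA.ap L1 e) (IA.ap fp p)))
        (IA.ap (IA.ap L2 e) (IA.ap sp p)))
      (.app (.app (.const hpp) (.app (.app (.const hL1) (.var 0))
          (.app (.const hfp) (.var 1))))
        (.app (.app (.const hL2) (.var 0)) (.app (.const hsp) (.var 1))))
    obtain ⟨L', hL', hL'r⟩ := real2 (IA := IA)
      (f := fun e p => IA.ap (IA.ap pp (IA.ap (IA.ap L1' e) (IA.ap fp p)))
        (IA.ap (IA.ap L2' e) (IA.ap sp p)))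
      (.app (.app (.const hpp) (.app (.app (.const hL1') (.var 0))
          (.app (.const hfp) (.var 1))))
        (.app (.app (.const hL2') (.var 0)) (.app (.const hsp) (.var 1))))
    refine ⟨L, hL, L', hL', fun v => ?_⟩
    simp only [interp]
    constructor
    · refine (hLr _ _).trans (le_trans (ap_mono (ap_mono le_rfl
        ((ap_mono le_rfl (fpr _ _)).trans (h1 v).1))
        ((ap_mono le_rfl (spr _ _)).trans (h2 v).1)) (ppr _ _))
    · refine (hL'r _ _).trans (le_trans (ap_mono (ap_mono le_rfl
        ((ap_mono le_rfl (fpr _ _)).trans (h1 v).2))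
        ((ap_mono le_rfl (spr _ _)).trans (h2 v).2)) (ppr _ _))
  | or φ ψ ihφ ihψ =>
    intro i j
    obtain ⟨L1, hL1, L1', hL1', h1⟩ := ihφ i j
    obtain ⟨L2, hL2, L2', hL2', h2⟩ := ihψ i j
    obtain ⟨bb, hbb, bbr⟩ := real3 (IA := IA)
      (f := fun u g y => IA.ap u (IA.ap g y))
      (.app (.var 0) (.app (.var 1) (.var 2)))
    obtain ⟨L, hL, hLr⟩ := real4 (IA := IA)
      (f := fun e p u w => IA.ap (IA.ap p (IA.ap (IA.ap bb u) (IA.ap L1 e)))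
        (IA.ap (IA.ap bb w) (IA.ap L2 e)))
      (.app (.app (.var 1) (.app (.app (.const hbb) (.var 2))
          (.app (.const hL1) (.var 0))))
        (.app (.app (.const hbb) (.var 3)) (.app (.const hL2) (.var 0))))
    obtain ⟨L', hL', hL'r⟩ := real4 (IA := IA)
      (f := fun e p u w => IA.ap (IA.ap p (IA.ap (IA.ap bb u) (IA.ap L1' e)))
        (IA.ap (IA.ap bb w) (IA.ap L2' e)))
      (.app (.app (.var 1) (.app (.app (.const hbb) (.var 2))
          (.app (.const hL1') (.var 0))))
        (.app (.app (.const hbb) (.var 3)) (.app (.const hL2') (.var 0))))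
    refine ⟨L, hL, L', hL', fun v => ?_⟩
    simp only [interp]
    constructor
    · refine le_plus fun x => le_imp_of_ap_le (le_imp_of_ap_le ?_)
      refine (hLr _ _ _ _).trans ?_
      have hX : IA.ap (IA.ap bb (IA.imp (IA.interp κ φ
          (fun k => if k = i then v j else v k)) x))
          (IA.ap L1 (IA.eqW (v i).1 (v j).1)) ≤ IA.imp (IA.interp κ φ v) x :=
        le_imp_of_ap_le ((bbr _ _ _).trans
          ((ap_mono le_rfl (h1 v).1).trans (ap_le le_rfl)))
      have hY : IA.ap (IA.ap bb (IA.imp (IA.interp κ ψ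
          (fun k => if k = i then v j else v k)) x))
          (IA.ap L2 (IA.eqW (v i).1 (v j).1)) ≤ IA.imp (IA.interp κ ψ v) x :=
        le_imp_of_ap_le ((bbr _ _ _).trans
          ((ap_mono le_rfl (h2 v).1).trans (ap_le le_rfl)))
      exact ap_le' (ap_le' (plus_le _ _ x) hX) hY
    · refine le_plus fun x => le_imp_of_ap_le (le_imp_of_ap_le ?_)
      refine (hL'r _ _ _ _).trans ?_
      have hX : IA.ap (IA.ap bb (IA.imp (IA.interp κ φ v) x))
          (IA.ap L1' (IA.eqW (v i).1 (v j).1)) ≤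
          IA.imp (IA.interp κ φ (fun k => if k = i then v j else v k)) x :=
        le_imp_of_ap_le ((bbr _ _ _).trans
          ((ap_mono le_rfl (h1 v).2).trans (ap_le le_rfl)))
      have hY : IA.ap (IA.ap bb (IA.imp (IA.interp κ ψ v) x))
          (IA.ap L2' (IA.eqW (v i).1 (v j).1)) ≤
          IA.imp (IA.interp κ ψ (fun k => if k = i then v j else v k)) x :=
        le_imp_of_ap_le ((bbr _ _ _).trans
          ((ap_mono le_rfl (h2 v).2).trans (ap_le le_rfl)))
      exact ap_le' (ap_le' (plus_le _ _ x) hX) hY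
  | imp φ ψ ihφ ihψ =>
    intro i j
    obtain ⟨L1, hL1, L1', hL1', h1⟩ := ihφ i j
    obtain ⟨L2, hL2, L2', hL2', h2⟩ := ihψ i j
    obtain ⟨L, hL, hLr⟩ := real3 (IA := IA)
      (f := fun e g y => IA.ap (IA.ap L2 e) (IA.ap g (IA.ap (IA.ap L1' e) y)))
      (.app (.app (.const hL2) (.var 0))
        (.app (.var 1) (.app (.app (.const hL1') (.var 0)) (.var 2))))
    obtain ⟨L', hL', hL'r⟩ := real3 (IA := IA)
      (f := fun e g y => IA.ap (IA.ap L2' e) (IA.ap g (IA.ap (IA.ap L1 e) y)))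
      (.app (.app (.const hL2') (.var 0))
        (.app (.var 1) (.app (.app (.const hL1) (.var 0)) (.var 2))))
    refine ⟨L, hL, L', hL', fun v => ?_⟩
    simp only [interp]
    constructor
    · refine le_imp_of_ap_le ((hLr _ _ _).trans ?_)
      exact (ap_mono le_rfl (ap_le' le_rfl (h1 v).2)).trans (h2 v).1
    · refine le_imp_of_ap_le ((hL'r _ _ _).trans ?_)
      exact (ap_mono le_rfl (ap_le' le_rfl (h1 v).1)).trans (h2 v).2
  | @ex m φ ih =>
    intro i j
    obtain ⟨L1, hL1, L1', hL1', h1⟩ := ih (Fin.castSucc i) (Fin.castSucc j)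
    have key1 : ∀ (v : Fin m → WSet A κ) (β : WSet A κ),
        IA.ap (IA.ap L1 (IA.eqW (v i).1 (v j).1)) (IA.interp κ φ (Fin.snoc v β)) ≤
          IA.interp κ φ (Fin.snoc (fun k => if k = i then v j else v k) β) := by
      intro v β
      have h := (h1 (Fin.snoc v β)).1
      rwa [snoc_ite, Fin.snoc_castSucc, Fin.snoc_castSucc] at h
    have key2 : ∀ (v : Fin m → WSet A κ) (β : WSet A κ),
        IA.ap (IA.ap L1' (IA.eqW (v i).1 (v j).1))
            (IA.interp κ φ (Fin.snoc (fun k => if k = i then v j else v k) β)) ≤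
          IA.interp κ φ (Fin.snoc v β) := by
      intro v β
      have h := (h1 (Fin.snoc v β)).2
      rwa [snoc_ite, Fin.snoc_castSucc, Fin.snoc_castSucc] at h
    obtain ⟨hb, hhb, hbr⟩ := real3 (IA := IA)
      (f := fun q e y => IA.ap q (IA.ap (IA.ap L1 e) y))
      (.app (.var 0) (.app (.app (.const hL1) (.var 1)) (.var 2)))
    obtain ⟨hb', hhb', hb'r⟩ := real3 (IA := IA)
      (f := fun q e y => IA.ap q (IA.ap (IA.ap L1' e) y))
      (.app (.var 0) (.app (.app (.const hL1') (.var 1)) (.var 2)))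
    obtain ⟨L, hL, hLr⟩ := real3 (IA := IA)
      (f := fun e p q => IA.ap p (IA.ap (IA.ap hb q) e))
      (.app (.var 1) (.app (.app (.const hhb) (.var 2)) (.var 0)))
    obtain ⟨L', hL', hL'r⟩ := real3 (IA := IA)
      (f := fun e p q => IA.ap p (IA.ap (IA.ap hb' q) e))
      (.app (.var 1) (.app (.app (.const hhb') (.var 2)) (.var 0)))
    refine ⟨L, hL, L', hL', fun v => ?_⟩
    simp only [interp]
    constructor
    · refine le_aex fun x => le_imp_of_ap_le ((hLr _ _ _).trans ?_)
      refine ap_le' (aex_le _ x) ?_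
      refine le_iInf fun β => le_imp_of_ap_le ?_
      exact (hbr _ _ _).trans (ap_le' (iInf_le _ β) (key1 v β))
    · refine le_aex fun x => le_imp_of_ap_le ((hL'r _ _ _).trans ?_)
      refine ap_le' (aex_le _ x) ?_
      refine le_iInf fun β => le_imp_of_ap_le ?_
      exact (hb'r _ _ _).trans (ap_le' (iInf_le _ β) (key2 v β))
  | @all m φ ih =>
    intro i j
    obtain ⟨L1, hL1, L1', hL1', h1⟩ := ih (Fin.castSucc i) (Fin.castSucc j)
    have key1 : ∀ (v : Fin m → WSet A κ) (β : WSet A κ),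
        IA.ap (IA.ap L1 (IA.eqW (v i).1 (v j).1)) (IA.interp κ φ (Fin.snoc v β)) ≤
          IA.interp κ φ (Fin.snoc (fun k => if k = i then v j else v k) β) := by
      intro v β
      have h := (h1 (Fin.snoc v β)).1
      rwa [snoc_ite, Fin.snoc_castSucc, Fin.snoc_castSucc] at h
    have key2 : ∀ (v : Fin m → WSet A κ) (β : WSet A κ),
        IA.ap (IA.ap L1' (IA.eqW (v i).1 (v j).1))
            (IA.interp κ φ (Fin.snoc (fun k => if k = i then v j else v k) β)) ≤
          IA.interp κ φ (Fin.snoc v β) := by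
      intro v β
      have h := (h1 (Fin.snoc v β)).2
      rwa [snoc_ite, Fin.snoc_castSucc, Fin.snoc_castSucc] at h
    obtain ⟨L, hL, hLr⟩ := real2 (IA := IA)
      (f := fun e p => IA.ap (IA.ap L1 e) p)
      (.app (.app (.const hL1) (.var 0)) (.var 1))
    obtain ⟨L', hL', hL'r⟩ := real2 (IA := IA)
      (f := fun e p => IA.ap (IA.ap L1' e) p)
      (.app (.app (.const hL1') (.var 0)) (.var 1))
    refine ⟨L, hL, L', hL', fun v => ?_⟩
    simp only [interp]
    constructor
    · refine le_iInf fun β => (hLr _ _).trans ?_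
      exact (ap_mono le_rfl (iInf_le _ β)).trans (key1 v β)
    · refine le_iInf fun β => (hL'r _ _).trans ?_
      exact (ap_mono le_rfl (iInf_le _ β)).trans (key2 v β)

end ImplicativeAlgebra
theorem stmt7 {A : Type u} [CompleteLattice A] (IA : ImplicativeAlgebra A)
    (κ : Cardinal.{u}) (hκ : κ.IsInaccessible) (hA : Cardinal.mk A < κ) {n : ℕ} {φ ψ : SetFormula n} (h : Der φ ψ) :
    (⨅ v : Fin n → WSet A κ, IA.imp (IA.interp κ φ v) (IA.interp κ ψ v)) ∈ IA.Sig := by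
  open ImplicativeAlgebra in
  induction h with
  | id φ => exact sigle_refl _
  | cut h1 h2 ih1 ih2 => exact sigle_trans ih1 ih2
  | botE φ =>
    refine sigle_intro ielem_sig fun v => ?_
    simp only [interp]
    exact (i_red _).trans bot_le
  | andI h1 h2 ih1 ih2 =>
    obtain ⟨F, hF, hFle⟩ := sigle_elem ih1
    obtain ⟨G, hG, hGle⟩ := sigle_elem ih2
    obtain ⟨s, hs, hr⟩ := real2 (IA := IA)
      (f := fun a k => IA.ap (IA.ap k (IA.ap F a)) (IA.ap G a))
      (.app (.app (.var 1) (.app (.const hF) (.var 0))) (.app (.const hG) (.var 0)))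
    refine sigle_intro hs fun v => ?_
    simp only [interp]
    refine le_times fun x => le_imp_of_ap_le ?_
    exact (hr _ _).trans (ap_le' (ap_le' le_rfl (ap_le (hFle v))) (ap_le (hGle v)))
  | andE1 φ ψ =>
    obtain ⟨fp, hfp, fpr⟩ := exists_fst (IA := IA)
    refine sigle_intro hfp fun v => ?_
    simp only [interp]
    exact fpr _ _
  | andE2 φ ψ =>
    obtain ⟨sp, hsp, spr⟩ := exists_snd (IA := IA)
    refine sigle_intro hsp fun v => ?_
    simp only [interp]
    exact spr _ _
  | orI1 φ ψ =>
    obtain ⟨s, hs, hr⟩ := real3 (IA := IA) (f := fun a u w => IA.ap u a)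
      (.app (.var 1) (.var 0))
    refine sigle_intro hs fun v => ?_
    simp only [interp]
    refine le_plus fun x => le_imp_of_ap_le (le_imp_of_ap_le ?_)
    exact (hr _ _ _).trans (ap_le le_rfl)
  | orI2 φ ψ =>
    obtain ⟨s, hs, hr⟩ := real3 (IA := IA) (f := fun a u w => IA.ap w a)
      (.app (.var 2) (.var 0))
    refine sigle_intro hs fun v => ?_
    simp only [interp]
    refine le_plus fun x => le_imp_of_ap_le (le_imp_of_ap_le ?_)
    exact (hr _ _ _).trans (ap_le le_rfl)
  | @orE n φ ψ χ ρ h1 h2 ih1 ih2 =>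
    have c1 := sigle_curry (IA := IA) (f := fun v => IA.interp κ φ v)
      (g := fun v => IA.interp κ ψ v) (h := fun v => IA.interp κ χ v) ih1
    have c2 := sigle_curry (IA := IA) (f := fun v => IA.interp κ φ v)
      (g := fun v => IA.interp κ ρ v) (h := fun v => IA.interp κ χ v) ih2
    obtain ⟨C1, hC1, hC1le⟩ := sigle_elem c1
    obtain ⟨C2, hC2, hC2le⟩ := sigle_elem c2
    obtain ⟨s, hs, hr⟩ := real2 (IA := IA)
      (f := fun a p => IA.ap (IA.ap p (IA.ap C1 a)) (IA.ap C2 a))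
      (.app (.app (.var 1) (.app (.const hC1) (.var 0))) (.app (.const hC2) (.var 0)))
    have H : IA.SigLe (fun v : Fin n → WSet A κ => IA.interp κ φ v)
        (fun v => IA.imp (IA.interp κ (ψ.or ρ) v) (IA.interp κ χ v)) := by
      refine sigle_intro hs fun v => le_imp_of_ap_le ?_
      simp only [interp]
      refine (hr _ _).trans ?_
      exact ap_le' (ap_le' (plus_le _ _ _) (ap_le (hC1le v))) (ap_le (hC2le v))
    exact sigle_uncurry H
  | impI h ih =>
    exact sigle_curry (IA := IA) ih
  | impE φ ψ =>
    obtain ⟨s, hs, hr⟩ := real1 (IA := IA) (f := fun p => IA.ap p IA.ielem)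
      (.app (.var 0) (.const ielem_sig))
    refine sigle_intro hs fun v => ?_
    simp only [interp]
    refine (hr _).trans (ap_le ((times_le_imp _ _ _).trans (IA.imp_antitone ?_)))
    exact le_imp_of_ap_le (i_red _)
  | allI h ih =>
    refine IA.Sig_upward ih ?_
    refine le_iInf fun v => ?_
    simp only [interp]
    rw [imp_iInf]
    refine le_iInf fun β => ?_
    refine (iInf_le _ (Fin.snoc v β)).trans ?_
    have hc : Fin.snoc v β ∘ Fin.castSucc = v :=
      funext fun x => by simp
    rw [interp_rename, hc]
  | allE φ k =>
    refine sigle_intro ielem_sig fun v => ?_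
    rw [interp_rename, comp_snoc_id]
    simp only [interp]
    exact (i_red _).trans (iInf_le _ (v k))
  | exI φ k =>
    obtain ⟨s, hs, hr⟩ := real2 (IA := IA) (f := fun a q => IA.ap q a)
      (.app (.var 1) (.var 0))
    refine sigle_intro hs fun v => ?_
    rw [interp_rename, comp_snoc_id]
    simp only [interp]
    refine le_aex fun x => le_imp_of_ap_le ?_
    exact (hr _ _).trans (ap_le' (iInf_le _ (v k)) le_rfl)
  | @exE n φ χ ψ h ih =>
    have c := sigle_curry (IA := IA)
      (f := fun w => IA.interp κ (φ.rename Fin.castSucc) w)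
      (g := fun w => IA.interp κ ψ w)
      (h := fun w => IA.interp κ (χ.rename Fin.castSucc) w) ih
    obtain ⟨D, hD, hDle⟩ := sigle_elem c
    obtain ⟨s, hs, hr⟩ := real2 (IA := IA)
      (f := fun a e => IA.ap e (IA.ap D a))
      (.app (.var 1) (.app (.const hD) (.var 0)))
    have H : IA.SigLe (fun v : Fin n → WSet A κ => IA.interp κ φ v)
        (fun v => IA.imp (IA.interp κ (SetFormula.ex ψ) v) (IA.interp κ χ v)) := by
      refine sigle_intro hs fun v => le_imp_of_ap_le ?_
      simp only [interp]
      refine (hr _ _).trans (ap_le' (aex_le _ (IA.interp κ χ v)) ?_)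
      refine le_iInf fun β => ?_
      have hD' := hDle (Fin.snoc v β)
      have hc : Fin.snoc v β ∘ Fin.castSucc = v :=
        funext fun x => by simp
      simp only [interp_rename, hc] at hD'
      exact ap_le hD'
    exact sigle_uncurry H
  | eqRefl φ i =>
    obtain ⟨e, he, her⟩ := exists_refl (IA := IA)
    refine sigle_intro (ap_sig kelem_sig he) fun v => ?_
    simp only [interp]
    exact (k_red e _).trans (her (v i).1)
  | @eqSubst n i j φ =>
    obtain ⟨L, hL, L', hL', hLr⟩ := leibniz (IA := IA) (κ := κ) φ i j
    have H : IA.SigLe (fun v : Fin n → WSet A κ => IA.eqW (v i).1 (v j).1)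
        (fun v => IA.imp (IA.interp κ φ v)
          (IA.interp κ (φ.rename fun k => if k = i then j else k) v)) := by
      refine IA.Sig_upward hL (le_iInf fun v => le_imp_of_ap_le (le_imp_of_ap_le ?_))
      rw [interp_rename, comp_ite]
      exact (hLr v).1
    exact sigle_uncurry H
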